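/- Let f : ℝⁿ → ℝ be locally Lipschitz and for ε > 0 define the ball-averaged smoothing f_ε(x) := (1/λ(B(0,ε))) ∫_{B(x,ε)} f dλ. If y is sampled uniformly from B(x,ε) then ∇f(y) exists almost surely and its expectation equals ∇f_ε(x); in particular f_ε is differentiable at every x with ∇f_ε(x) = (1/λ(B(0,ε))) ∫_{B(x,ε)} ∇f dλ. -/

import Mathlib

open MeasureTheory Metric Set

lemma LocallyLipschitz.exists_lipschitzOnWith_of_isCompact {α β : Type*} [PseudoMetricSpace α]
    [PseudoMetricSpace β] {f : α → β} (hf : LocallyLipschitz f) {s : Set α} (hs : IsCompact s) :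
    ∃ K : NNReal, LipschitzOnWith K f s := by
  rcases s.eq_empty_or_nonempty with rfl | ⟨x₀, hx₀⟩
  · exact ⟨0, by simp⟩
  obtain ⟨C, hC⟩ := Metric.isBounded_iff.1 (hs.image (LocallyLipschitz.continuous hf)).isBounded
  choose K t ht hlip using hf
  obtain ⟨F, hFs, hcover⟩ := hs.elim_nhds_subcover (fun x => interior (t x))
    (fun x _ => interior_mem_nhds.2 (ht x))
  have hcover' : s ⊆ ⋃ i : F, interior (t (i : α)) := by
    intro z hz
    rcases Set.mem_iUnion₂.1 (hcover hz) with ⟨x, hxF, hx⟩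
    exact Set.mem_iUnion.2 ⟨⟨x, hxF⟩, hx⟩
  obtain ⟨δ, hδ, hball⟩ := lebesgue_number_lemma_of_metric hs
    (fun i : F => isOpen_interior) hcover'
  have hC0 : 0 ≤ C := le_trans (by simp) (hC (mem_image_of_mem f hx₀) (mem_image_of_mem f hx₀))
  set K₀ : NNReal := F.sup K with hK₀
  refine ⟨K₀ + Real.toNNReal (C / δ), lipschitzOnWith_iff_dist_le_mul.2 fun x hx y hy => ?_⟩
  have hKcoe : ((K₀ + Real.toNNReal (C / δ) : NNReal) : ℝ) = (K₀ : ℝ) + max (C / δ) 0 := by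
    push_cast [Real.coe_toNNReal']; ring
  rcases lt_or_ge (dist x y) δ with hlt | hge
  · obtain ⟨i, hi⟩ := hball x hx
    have hxt : x ∈ t (i : α) := interior_subset (hi (mem_ball_self hδ))
    have hyt : y ∈ t (i : α) := interior_subset (hi (by simpa [mem_ball, dist_comm] using hlt))
    have := lipschitzOnWith_iff_dist_le_mul.1 (hlip (i : α)) x hxt y hyt
    refine this.trans (mul_le_mul_of_nonneg_right ?_ dist_nonneg)
    rw [hKcoe]
    have : (K (i : α) : ℝ) ≤ (K₀ : ℝ) := by
      exact_mod_cast NNReal.coe_le_coe.2 (Finset.le_sup i.2)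
    nlinarith [le_max_right (C / δ) 0]
  · have h1 : dist (f x) (f y) ≤ C := hC (mem_image_of_mem f hx) (mem_image_of_mem f hy)
    have h2 : C ≤ (C / δ) * dist x y := by
      rw [div_mul_eq_mul_div, le_div_iff₀ hδ]
      exact mul_le_mul_of_nonneg_left hge hC0
    refine h1.trans (h2.trans ?_)
    rw [hKcoe]
    nlinarith [dist_nonneg (x := x) (y := y), le_max_left (C / δ) 0, K₀.coe_nonneg]

lemma translate_setIntegral {n : ℕ} {G : Type*} [NormedAddCommGroup G] [NormedSpace ℝ G]
    [CompleteSpace G] (g : EuclideanSpace ℝ (Fin n) → G) (x : EuclideanSpace ℝ (Fin n)) (ε : ℝ) :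
    ∫ y in Metric.closedBall (0 : EuclideanSpace ℝ (Fin n)) ε, g (x + y) =
      ∫ z in Metric.closedBall x ε, g z := by
  have hemb : MeasurableEmbedding (fun y : EuclideanSpace ℝ (Fin n) => x + y) := by
    simpa using (MeasurableEquiv.addLeft x).measurableEmbedding
  have h := (measurePreserving_add_left (volume : Measure (EuclideanSpace ℝ (Fin n)))
      x).setIntegral_preimage_emb hemb g (Metric.closedBall x ε)
  have hpre : (fun y : EuclideanSpace ℝ (Fin n) => x + y) ⁻¹' Metric.closedBall x ε =
      Metric.closedBall (0 : EuclideanSpace ℝ (Fin n)) ε := by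
    ext y
    simp [Metric.mem_closedBall, dist_eq_norm, add_sub_cancel_left]
  rwa [hpre] at h

theorem smoothing_gradient {n : ℕ} (f : EuclideanSpace ℝ (Fin n) → ℝ)
    (hf : LocallyLipschitz f) (ε : ℝ) (hε : 0 < ε)
    (fε : EuclideanSpace ℝ (Fin n) → ℝ)
    (hfε : ∀ x, fε x = (volume (Metric.closedBall (0 : EuclideanSpace ℝ (Fin n)) ε)).toReal⁻¹ *
        ∫ y in Metric.closedBall x ε, f y) :
    ∀ x : EuclideanSpace ℝ (Fin n),
      (∀ᵐ y ∂(volume.restrict (Metric.closedBall x ε)), DifferentiableAt ℝ f y) ∧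
      HasGradientAt fε
        ((volume (Metric.closedBall (0 : EuclideanSpace ℝ (Fin n)) ε)).toReal⁻¹ •
          ∫ y in Metric.closedBall x ε, gradient f y) x := by
  intro x₀
  set c : ℝ := (volume (Metric.closedBall (0 : (EuclideanSpace ℝ (Fin n))) ε)).toReal⁻¹ with hc
  have hcont : Continuous f := LocallyLipschitz.continuous hf
  obtain ⟨K, hK⟩ := hf.exists_lipschitzOnWith_of_isCompact
    (isCompact_closedBall x₀ (ε + 1))
  -- a.e. differentiability
  have hRad : ∀ᵐ z ∂(volume : Measure (EuclideanSpace ℝ (Fin n))), z ∈ closedBall x₀ (ε + 1) →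
      DifferentiableWithinAt ℝ f (closedBall x₀ (ε + 1)) z :=
    hK.ae_differentiableWithinAt_of_mem
  have hDiff : ∀ᵐ z ∂(volume : Measure (EuclideanSpace ℝ (Fin n))), z ∈ ball x₀ (ε + 1) → DifferentiableAt ℝ f z := by
    filter_upwards [hRad] with z hz hzb
    exact (hz (ball_subset_closedBall hzb)).differentiableAt
      (Filter.mem_of_superset (isOpen_ball.mem_nhds hzb) ball_subset_closedBall)
  have hsub : closedBall x₀ ε ⊆ ball x₀ (ε + 1) := closedBall_subset_ball (by linarith)
  have hae1 : ∀ᵐ y ∂(volume.restrict (closedBall x₀ ε)), DifferentiableAt ℝ f y := by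
    refine (ae_restrict_iff' measurableSet_closedBall).2 ?_
    filter_upwards [hDiff] with z hz hmem
    exact hz (hsub hmem)
  refine ⟨hae1, ?_⟩
  -- bound on fderiv
  have hfb : ∀ z ∈ closedBall x₀ ε, ‖fderiv ℝ f z‖ ≤ (K : ℝ) := by
    intro z hz
    by_cases hdz : DifferentiableAt ℝ f z
    · exact hdz.hasFDerivAt.le_of_lipschitzOn (isOpen_ball.mem_nhds (hsub hz))
        (hK.mono ball_subset_closedBall)
    · rw [fderiv_zero_of_not_differentiableAt hdz]; simp
  -- integrability of fderiv and gradient on the ball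
  have hgrad_eq : ∀ z, gradient f z = (InnerProductSpace.toDual ℝ (EuclideanSpace ℝ (Fin n))).symm (fderiv ℝ f z) :=
    fun z => rfl
  have hfderiv_meas : AEStronglyMeasurable (fun z => fderiv ℝ f z)
      (volume.restrict (closedBall x₀ ε)) := (measurable_fderiv ℝ f).aestronglyMeasurable
  have hconstK : Integrable (fun _ : (EuclideanSpace ℝ (Fin n)) => (K : ℝ)) (volume.restrict (closedBall x₀ ε)) :=
    integrableOn_const measure_closedBall_lt_top.ne
  have hint_fderiv : IntegrableOn (fun z => fderiv ℝ f z) (closedBall x₀ ε) volume := by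
    refine Integrable.mono' hconstK hfderiv_meas ?_
    exact (ae_restrict_iff' measurableSet_closedBall).2 (Filter.Eventually.of_forall hfb)
  have hint_grad : IntegrableOn (fun z => gradient f z) (closedBall x₀ ε) volume := by
    refine Integrable.mono' hconstK ?_ ?_
    · exact (((InnerProductSpace.toDual ℝ (EuclideanSpace ℝ (Fin n))).symm.continuous.measurable).comp
        (measurable_fderiv ℝ f)).aestronglyMeasurable
    · refine (ae_restrict_iff' measurableSet_closedBall).2 (Filter.Eventually.of_forall ?_)
      intro z hz
      rw [hgrad_eq z, LinearIsometryEquiv.norm_map]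
      exact hfb z hz
  -- parametric differentiation under the integral
  set μ : Measure (EuclideanSpace ℝ (Fin n)) := volume.restrict (closedBall (0 : (EuclideanSpace ℝ (Fin n))) ε) with hμ
  have hF_meas : ∀ᶠ x in nhds x₀, AEStronglyMeasurable (fun y => f (x + y)) μ :=
    Filter.Eventually.of_forall fun x =>
      (hcont.comp (continuous_const.add continuous_id)).aestronglyMeasurable
  have hF_int : Integrable (fun y => f (x₀ + y)) μ :=
    ((hcont.comp (continuous_const.add continuous_id)).continuousOn).integrableOn_compact
      (isCompact_closedBall _ _)
  have hF'_meas : AEStronglyMeasurable (fun y => fderiv ℝ f (x₀ + y)) μ :=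
    ((measurable_fderiv ℝ f).comp
      ((continuous_const.add continuous_id).measurable)).aestronglyMeasurable
  have h_lip : ∀ᵐ y ∂μ, LipschitzOnWith (Real.nnabs (K : ℝ))
      (fun x => f (x + y)) (ball x₀ 1) := by
    refine (ae_restrict_iff' measurableSet_closedBall).2 (Filter.Eventually.of_forall ?_)
    intro y hy
    refine lipschitzOnWith_iff_dist_le_mul.2 fun a ha b hb => ?_
    have hmem : ∀ z ∈ ball x₀ 1, z + y ∈ closedBall x₀ (ε + 1) := by
      intro z hz
      have h1 : dist z x₀ < 1 := mem_ball.1 hz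
      have h2 : ‖y‖ ≤ ε := by simpa [mem_closedBall, dist_eq_norm] using hy
      have : dist (z + y) x₀ ≤ dist z x₀ + ‖y‖ := by
        calc dist (z + y) x₀ ≤ dist (z + y) (z) + dist z x₀ := dist_triangle _ _ _
          _ = ‖y‖ + dist z x₀ := by rw [dist_eq_norm]; simp
          _ = dist z x₀ + ‖y‖ := by ring
      exact mem_closedBall.2 (by linarith)
    have := lipschitzOnWith_iff_dist_le_mul.1 hK (a + y) (hmem a ha) (b + y) (hmem b hb)
    rw [dist_add_right] at this
    simpa [Real.coe_nnabs, abs_of_nonneg K.coe_nonneg] using this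
  have bound_int : Integrable (fun _ : (EuclideanSpace ℝ (Fin n)) => (K : ℝ)) μ :=
    integrableOn_const measure_closedBall_lt_top.ne
  have h_diff : ∀ᵐ y ∂μ, HasFDerivAt (fun x => f (x + y)) (fderiv ℝ f (x₀ + y)) x₀ := by
    have hqmp := (measurePreserving_add_left (volume : Measure (EuclideanSpace ℝ (Fin n)))
      x₀).quasiMeasurePreserving
    have hae : ∀ᵐ y ∂(volume : Measure (EuclideanSpace ℝ (Fin n))),
        x₀ + y ∈ ball x₀ (ε + 1) → DifferentiableAt ℝ f (x₀ + y) := hqmp.ae hDiff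
    refine (ae_restrict_iff' measurableSet_closedBall).2 ?_
    filter_upwards [hae] with y hy hmem
    have hy2 : x₀ + y ∈ ball x₀ (ε + 1) := by
      have h2 : ‖y‖ ≤ ε := by simpa [mem_closedBall, dist_eq_norm] using hmem
      have : dist (x₀ + y) x₀ = ‖y‖ := by rw [dist_eq_norm]; simp
      exact mem_ball.2 (by rw [this]; linarith)
    have hd := hy hy2
    have h1 : HasFDerivAt (fun x : (EuclideanSpace ℝ (Fin n)) => x + y) (ContinuousLinearMap.id ℝ (EuclideanSpace ℝ (Fin n))) x₀ :=
      (hasFDerivAt_id x₀).add_const y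
    simpa [Function.comp_def] using hd.hasFDerivAt.comp x₀ h1
  obtain ⟨-, hder⟩ := hasFDerivAt_integral_of_dominated_loc_of_lip (ball_mem_nhds x₀ one_pos) hF_meas hF_int
    hF'_meas h_lip bound_int h_diff
  -- transfer via translation
  have heq1 : (fun x => ∫ y in closedBall (0 : (EuclideanSpace ℝ (Fin n))) ε, f (x + y)) =
      fun x => ∫ z in closedBall x ε, f z := by
    funext x; exact translate_setIntegral f x ε
  have heq2 : (∫ y in closedBall (0 : (EuclideanSpace ℝ (Fin n))) ε, fderiv ℝ f (x₀ + y)) =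
      ∫ z in closedBall x₀ ε, fderiv ℝ f z := translate_setIntegral (fderiv ℝ f) x₀ ε
  rw [heq1, heq2] at hder
  have hder3 : HasFDerivAt fε (c • ∫ z in closedBall x₀ ε, fderiv ℝ f z) x₀ := by
    have := hder.const_mul c
    have hfeq : fε = fun x => c * ∫ z in closedBall x ε, f z := funext hfε
    rw [hfeq]
    exact this
  rw [hasGradientAt_iff_hasFDerivAt]
  have key : (InnerProductSpace.toDual ℝ (EuclideanSpace ℝ (Fin n)))
      (c • ∫ y in closedBall x₀ ε, gradient f y) =
      c • ∫ z in closedBall x₀ ε, fderiv ℝ f z := by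
    refine ContinuousLinearMap.ext fun h => ?_
    rw [InnerProductSpace.toDual_apply_apply, ContinuousLinearMap.smul_apply,
      real_inner_smul_left]
    congr 1
    rw [real_inner_comm, ← integral_inner hint_grad h]
    rw [ContinuousLinearMap.integral_apply hint_fderiv]
    refine setIntegral_congr_fun measurableSet_closedBall fun z _ => ?_
    rw [real_inner_comm, hgrad_eq z, InnerProductSpace.toDual_symm_apply]
  rw [key]
  exact hder3
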